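/- arXiv:1609.00066 — 5 statements merged into one kernel-verified Lean document; each statement's English description precedes it below -/
import Mathlib

section
/- The negative binomial PMF converges pointwise to the Poisson PMF as r → ∞ with mean held fixed: for fixed μ > 0 and each x ∈ ℕ, setting p = r/(r+μ), the negative binomial PMF Γ(r+x)/(Γ(r)Γ(x+1)) p^r (1−p)^x converges to μ^x e^{−μ}/x! as r → ∞. -/
open scoped Nat
open Real Filter Topology

lemma gamma_add_nat_prod (r : ℝ) (hr : 0 < r) (x : ℕ) :
    Real.Gamma (r + x) = Real.Gamma r * ∏ i ∈ Finset.range x, (r + i) := by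
  induction x with
  | zero => simp
  | succ n ih =>
    have h : (r : ℝ) + (n + 1 : ℕ) = (r + n) + 1 := by push_cast; ring
    rw [h, Real.Gamma_add_one (by positivity), ih, Finset.prod_range_succ]
    ring

/-- The negative binomial PMF converges pointwise to the Poisson PMF as `r → ∞` with the
mean held fixed at `μ` (via `p = r/(r+μ)`). -/
theorem negBinomial_tendsto_poisson (μ : ℝ) (hμ : 0 < μ) (x : ℕ) :
    Tendsto
      (fun r : ℝ ↦
        Real.Gamma (r + x) / (Real.Gamma r * Real.Gamma ((x : ℝ) + 1)) *
          (r / (r + μ)) ^ r * (1 - r / (r + μ)) ^ x)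
      atTop (𝓝 (μ ^ x * Real.exp (-μ) / x !)) := by
  -- factor 1: product → 1
  have hprod : Tendsto (fun r : ℝ => ∏ i ∈ Finset.range x, ((r + i) / (r + μ)))
      atTop (𝓝 1) := by
    have h : Tendsto (fun r : ℝ => ∏ i ∈ Finset.range x, ((r + i) / (r + μ)))
        atTop (𝓝 (∏ _i ∈ Finset.range x, (1 : ℝ))) := by
      apply tendsto_finset_prod
      intro i _
      have h1 : Tendsto (fun r : ℝ => 1 + ((i : ℝ) - μ) / (r + μ)) atTop (𝓝 (1 + 0)) :=
        tendsto_const_nhds.add (Tendsto.div_atTop tendsto_const_nhds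
          (tendsto_atTop_add_const_right _ μ tendsto_id))
      have heq : ∀ᶠ r : ℝ in atTop, 1 + ((i : ℝ) - μ) / (r + μ) = (r + i) / (r + μ) := by
        filter_upwards [eventually_gt_atTop 0] with r hr
        have hrm : r + μ ≠ 0 := by positivity
        field_simp
        ring
      simpa using h1.congr' heq
    simpa using h
  -- factor 2: (r/(r+μ))^r → exp(-μ)
  have hexp : Tendsto (fun r : ℝ => (r / (r + μ)) ^ r) atTop (𝓝 (Real.exp (-μ))) := by
    have h1 : Tendsto (fun r : ℝ => ((1 + μ / r) ^ r)⁻¹) atTop (𝓝 (Real.exp μ)⁻¹) :=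
      (tendsto_one_add_div_rpow_exp μ).inv₀ (Real.exp_ne_zero μ)
    rw [← Real.exp_neg] at h1
    refine h1.congr' ?_
    filter_upwards [eventually_gt_atTop 0] with r hr
    have h2 : (1 : ℝ) + μ / r = (r + μ) / r := by field_simp
    have h3 : (0 : ℝ) ≤ (r + μ) / r := by positivity
    rw [h2, ← Real.inv_rpow h3, inv_div]
  -- combine
  have hcomb : Tendsto
      (fun r : ℝ => (∏ i ∈ Finset.range x, ((r + i) / (r + μ))) * μ ^ x *
        (r / (r + μ)) ^ r / x !) atTop (𝓝 (μ ^ x * Real.exp (-μ) / x !)) := by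
    have := ((hprod.mul (tendsto_const_nhds (x := μ ^ x))).mul hexp).div_const (x ! : ℝ)
    simpa using this
  refine hcomb.congr' ?_
  filter_upwards [eventually_gt_atTop 0] with r hr
  have hrm : (0 : ℝ) < r + μ := by positivity
  have hΓ : Real.Gamma r ≠ 0 := (Real.Gamma_pos_of_pos hr).ne'
  rw [gamma_add_nat_prod r hr x, Real.Gamma_nat_eq_factorial]
  have h1 : 1 - r / (r + μ) = μ / (r + μ) := by field_simp; ring
  rw [h1]
  have hfact : (x ! : ℝ) ≠ 0 := by positivity
  rw [div_pow, mul_div_assoc]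
  rw [Finset.prod_div_distrib, Finset.prod_const, Finset.card_range]
  field_simp
end

section
/- For the pairwise Poisson graphical model with unnormalized mass h(x) = exp(θᵀx + xᵀΦx − Σ_i log(x_i!)) on ℤ₊^d (where Φ has zero diagonal), if some off-diagonal entry φ_ij > 0 then the normalizing sum Σ_{x ∈ ℤ₊^d} h(x) diverges; i.e., normalizability requires φ_ij ≤ 0 for all i ≠ j. -/
open scoped Nat
open Real
open scoped ENNReal

open Filter in
private lemma pgm_aux_tendsto (c b : ℝ) (hc : 0 < c) :
    Filter.Tendsto (fun x : ℝ => c * x + b - 2 * Real.log x) atTop atTop := by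
  have hlog : Tendsto (fun x : ℝ => Real.log x / x) atTop (nhds 0) :=
    Real.isLittleO_log_id_atTop.tendsto_div_nhds_zero
  have hb : Tendsto (fun x : ℝ => b / x) atTop (nhds 0) := by
    simpa [div_eq_mul_inv] using tendsto_inv_atTop_zero.const_mul b
  have hbr : Tendsto (fun x : ℝ => c + b / x - 2 * (Real.log x / x)) atTop (nhds c) := by
    have := ((tendsto_const_nhds (x := c)).add hb).sub (hlog.const_mul 2)
    simpa using this
  have hprod : Tendsto (fun x : ℝ => x * (c + b / x - 2 * (Real.log x / x))) atTop atTop :=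
    tendsto_id.atTop_mul_pos hc hbr
  refine hprod.congr' ?_
  filter_upwards [eventually_gt_atTop (0:ℝ)] with x hx
  field_simp

/-- The pairwise Poisson graphical model is not normalizable with any positive
off-diagonal interaction: if `Φ i j > 0` for some `i ≠ j` then the normalizing sum
diverges. -/
theorem pgm_not_normalizable_of_pos {d : ℕ} (θ : Fin d → ℝ) (Φ : Fin d → Fin d → ℝ)
    (hsym : ∀ i j, Φ i j = Φ j i) (hdiag : ∀ i, Φ i i = 0)
    (i j : Fin d) (hij : i ≠ j) (hpos : 0 < Φ i j) :
    ∑' x : Fin d → ℕ,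
        ENNReal.ofReal
          (Real.exp ((∑ k, θ k * (x k : ℝ)) + ∑ k, ∑ l, (x k : ℝ) * Φ k l * (x l : ℝ)) /
            ∏ k, ((x k)! : ℝ)) = ⊤ := by
  classical
  set F : (Fin d → ℕ) → ℝ≥0∞ := fun x =>
    ENNReal.ofReal
      (Real.exp ((∑ k, θ k * (x k : ℝ)) + ∑ k, ∑ l, (x k : ℝ) * Φ k l * (x l : ℝ)) /
        ∏ k, ((x k)! : ℝ)) with hF
  set e : ℕ → Fin d → ℕ := fun n k => if k = i ∨ k = j then n else 0 with he
  have hei : ∀ n, e n i = n := fun n => by simp [he]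
  have hej : ∀ n, e n j = n := fun n => by simp [he]
  have hek : ∀ n k, k ≠ i → k ≠ j → e n k = 0 := by
    intro n k h1 h2; simp [he, h1, h2]
  have hinj : Function.Injective e := by
    intro a b hab
    have := congrFun hab i
    rwa [hei, hei] at this
  -- summing a function vanishing off {i, j}
  have hsum : ∀ G : Fin d → ℝ, (∀ k, k ≠ i → k ≠ j → G k = 0) → ∑ k, G k = G i + G j := by
    intro G hG
    rw [← Finset.sum_subset (Finset.subset_univ ({i, j} : Finset (Fin d)))
        (fun x _ hx => by
          simp only [Finset.mem_insert, Finset.mem_singleton, not_or] at hx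
          exact hG x hx.1 hx.2),
      Finset.sum_pair hij]
  -- value of F on e n
  have hval : ∀ n : ℕ, F (e n) =
      ENNReal.ofReal (Real.exp ((θ i + θ j) * n + 2 * Φ i j * (n : ℝ) ^ 2) / ((n ! : ℝ)) ^ 2) := by
    intro n
    have h1 : ∑ k, θ k * (e n k : ℝ) = (θ i + θ j) * n := by
      rw [hsum _ (fun k hk1 hk2 => by rw [hek n k hk1 hk2]; simp), hei, hej]; ring
    have hinner : ∀ k, (∑ l, (e n k : ℝ) * Φ k l * (e n l : ℝ))
        = (e n k : ℝ) * Φ k i * n + (e n k : ℝ) * Φ k j * n := by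
      intro k
      rw [hsum _ (fun l hl1 hl2 => by rw [hek n l hl1 hl2]; simp), hei, hej]
    have h2 : ∑ k, ∑ l, (e n k : ℝ) * Φ k l * (e n l : ℝ) = 2 * Φ i j * (n : ℝ) ^ 2 := by
      rw [hsum _ (fun k hk1 hk2 => by
        rw [hinner k, hek n k hk1 hk2]; simp), hinner, hinner, hei, hej,
        hdiag i, hdiag j, hsym j i]
      ring
    have h3 : ∏ k, ((e n k)! : ℝ) = ((n ! : ℝ)) ^ 2 := by
      rw [← Finset.prod_subset (Finset.subset_univ ({i, j} : Finset (Fin d)))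
          (fun x _ hx => by
            simp only [Finset.mem_insert, Finset.mem_singleton, not_or] at hx
            rw [hek n x hx.1 hx.2]; simp),
        Finset.prod_pair hij, hei, hej]
      ring
    simp only [hF, h1, h2, h3]
  -- eventual bound: F (e n) ≥ 1 for n ≥ N
  have hT := pgm_aux_tendsto (2 * Φ i j) (θ i + θ j) (by linarith)
  have hTn := (hT.comp (tendsto_natCast_atTop_atTop (R := ℝ))).eventually_ge_atTop 0
  obtain ⟨N, hN⟩ := Filter.eventually_atTop.1 hTn
  have hone : ∀ n : ℕ, N + 1 ≤ n → 1 ≤ F (e n) := by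
    intro n hn
    have hn1 : 1 ≤ n := le_trans (Nat.le_add_left 1 N) hn
    have hnR : (1 : ℝ) ≤ (n : ℝ) := by exact_mod_cast hn1
    have hlogn : 0 ≤ 2 * Φ i j * (n : ℝ) + (θ i + θ j) - 2 * Real.log (n : ℝ) :=
      hN n (le_trans (Nat.le_succ N) hn)
    rw [hval n]
    rw [ENNReal.one_le_ofReal, le_div_iff₀ (by positivity), one_mul]
    have hfact : ((n ! : ℝ)) ^ 2 ≤ ((n : ℝ) ^ n) ^ 2 := by
      have : (n ! : ℝ) ≤ (n : ℝ) ^ n := by exact_mod_cast Nat.factorial_le_pow n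
      exact pow_le_pow_left₀ (by positivity) this 2
    refine le_trans hfact ?_
    have hpow : ((n : ℝ) ^ n) ^ 2 = Real.exp ((2 * n) * Real.log (n : ℝ)) := by
      rw [← pow_mul, ← Real.exp_log (show (0:ℝ) < (n:ℝ) ^ (n * 2) by positivity),
        Real.log_pow]
      push_cast
      ring_nf
    rw [hpow, Real.exp_le_exp]
    nlinarith [mul_nonneg (by positivity : (0:ℝ) ≤ (n:ℝ)) hlogn]
  -- conclude
  rw [← top_le_iff]
  calc (⊤ : ℝ≥0∞) = ∑' _ : ℕ, (1 : ℝ≥0∞) :=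
        (ENNReal.tsum_const_eq_top_of_ne_zero one_ne_zero).symm
    _ ≤ ∑' n : ℕ, F (e (n + (N + 1))) :=
        ENNReal.tsum_le_tsum fun n => hone (n + (N + 1)) (Nat.le_add_left _ _)
    _ ≤ ∑' n : ℕ, F (e n) :=
        ENNReal.tsum_comp_le_tsum_of_injective (add_left_injective (N + 1)) fun n => F (e n)
    _ ≤ ∑' x : Fin d → ℕ, F x := ENNReal.tsum_comp_le_tsum_of_injective hinj F
end

section
/- For the two-dimensional case with unnormalized mass h(x,y) = exp(θ1 x + θ2 y + 2φ x y)/(x! y!) on ℤ₊², the sum Σ_{x,y ≥ 0} h(x,y) is finite if φ ≤ 0 and infinite if φ > 0. -/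
open scoped Nat
open Real
open scoped ENNReal

lemma poisson_sum_lt_top (θ : ℝ) :
    ∑' n : ℕ, ENNReal.ofReal (Real.exp (θ * n) / (n ! : ℝ)) < ⊤ := by
  have hs : Summable (fun n : ℕ => Real.exp θ ^ n / n !) := Real.summable_pow_div_factorial _
  have heq : ∀ n : ℕ, Real.exp (θ * n) / (n ! : ℝ) = Real.exp θ ^ n / n ! := by
    intro n; rw [mul_comm, Real.exp_nat_mul]
  have h := ENNReal.ofReal_tsum_of_nonneg (fun n => by positivity) hs
  calc ∑' n : ℕ, ENNReal.ofReal (Real.exp (θ * n) / (n ! : ℝ))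
      = ∑' n : ℕ, ENNReal.ofReal (Real.exp θ ^ n / n !) := by simp_rw [heq]
    _ = ENNReal.ofReal (∑' n : ℕ, (Real.exp θ ^ n / n ! : ℝ)) := h.symm
    _ < ⊤ := ENNReal.ofReal_lt_top

/-- For the two-dimensional Poisson graphical model with unnormalized mass
`exp(θ1 x + θ2 y + 2phixy)/(x! y!)`, the normalizing sum is finite iff `phi ≤ 0`:
it is finite when `phi ≤ 0` and infinite when `phi > 0`. -/
theorem pgm_two_dim_normalizable_iff (θ1 θ2 phi : ℝ) :
    (phi ≤ 0 →
      ∑' x : ℕ, ∑' y : ℕ,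
        ENNReal.ofReal
          (Real.exp (θ1 * x + θ2 * y + 2 * phi * x * y) / ((x ! : ℝ) * (y ! : ℝ))) < ⊤) ∧
    (0 < phi →
      ∑' x : ℕ, ∑' y : ℕ,
        ENNReal.ofReal
          (Real.exp (θ1 * x + θ2 * y + 2 * phi * x * y) / ((x ! : ℝ) * (y ! : ℝ))) = ⊤) := by
  constructor
  · intro hphi
    have hle : ∀ x y : ℕ,
        ENNReal.ofReal (Real.exp (θ1 * x + θ2 * y + 2 * phi * x * y) / ((x ! : ℝ) * (y ! : ℝ)))
          ≤ ENNReal.ofReal (Real.exp (θ1 * x) / (x ! : ℝ)) *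
            ENNReal.ofReal (Real.exp (θ2 * y) / (y ! : ℝ)) := by
      intro x y
      rw [← ENNReal.ofReal_mul (by positivity)]
      apply ENNReal.ofReal_le_ofReal
      rw [div_mul_div_comm, ← Real.exp_add]
      apply div_le_div_of_nonneg_right ?_ (by positivity)
      · apply Real.exp_le_exp.2
        have : 2 * phi * x * y ≤ 0 := by
          have hx : (0:ℝ) ≤ x := Nat.cast_nonneg x
          have hy : (0:ℝ) ≤ y := Nat.cast_nonneg y
          have := mul_nonneg (mul_nonneg hx hy) (neg_nonneg.2 hphi); nlinarith
        linarith
    calc ∑' x : ℕ, ∑' y : ℕ,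
          ENNReal.ofReal (Real.exp (θ1 * x + θ2 * y + 2 * phi * x * y) / ((x ! : ℝ) * (y ! : ℝ)))
        ≤ ∑' x : ℕ, ∑' y : ℕ, ENNReal.ofReal (Real.exp (θ1 * x) / (x ! : ℝ)) *
            ENNReal.ofReal (Real.exp (θ2 * y) / (y ! : ℝ)) :=
          ENNReal.tsum_le_tsum fun x => ENNReal.tsum_le_tsum fun y => hle x y
      _ = (∑' x : ℕ, ENNReal.ofReal (Real.exp (θ1 * x) / (x ! : ℝ))) *
            (∑' y : ℕ, ENNReal.ofReal (Real.exp (θ2 * y) / (y ! : ℝ))) := by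
          simp_rw [ENNReal.tsum_mul_left, ENNReal.tsum_mul_right]
      _ < ⊤ := ENNReal.mul_lt_top (poisson_sum_lt_top θ1) (poisson_sum_lt_top θ2)
  · intro hphi
    set g : ℕ → ℝ≥0∞ := fun x =>
      ENNReal.ofReal (Real.exp (θ1 * x + θ2 * x + 2 * phi * x * x) / ((x ! : ℝ) * (x ! : ℝ)))
      with hg
    have hlog : ∀ᶠ t : ℝ in Filter.atTop, Real.log t ≤ (phi / 2) * t := by
      have h := Real.isLittleO_log_id_atTop.def (by positivity : (0:ℝ) < phi / 2)
      filter_upwards [h, Filter.eventually_ge_atTop (1:ℝ)] with t ht ht1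
      have : |Real.log t| ≤ phi / 2 * |t| := by simpa [Real.norm_eq_abs] using ht
      calc Real.log t ≤ |Real.log t| := le_abs_self _
        _ ≤ phi / 2 * |t| := this
        _ = phi / 2 * t := by rw [abs_of_nonneg (by linarith)]
    have hpos : ∀ᶠ t : ℝ in Filter.atTop, 0 ≤ (θ1 + θ2) + phi * t :=
      Filter.eventually_atTop.2 ⟨(-(θ1+θ2))/phi, fun t ht => by
        have := (div_le_iff₀ hphi).1 ht; nlinarith⟩
    have hnat : ∀ᶠ x : ℕ in Filter.atTop, (1:ℝ≥0∞) ≤ g x := by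
      have hcast : Filter.Tendsto (fun x : ℕ => (x : ℝ)) Filter.atTop Filter.atTop :=
        tendsto_natCast_atTop_atTop
      filter_upwards [hcast.eventually hlog, hcast.eventually hpos,
        Filter.eventually_ge_atTop 1] with x hlx hpx hx1
      have hx0 : (0:ℝ) < x := by exact_mod_cast hx1
      have hfac : ((x ! : ℝ) * (x ! : ℝ)) ≤ (x:ℝ) ^ (2 * x) := by
        have h1 : ((x ! : ℕ) : ℝ) ≤ ((x ^ x : ℕ) : ℝ) := by
          exact_mod_cast Nat.factorial_le_pow x
        have : ((x ! : ℝ)) * ((x ! : ℝ)) ≤ ((x:ℝ) ^ x) * ((x:ℝ) ^ x) := by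
          push_cast at h1
          exact mul_le_mul h1 h1 (by positivity) (by positivity)
        calc ((x ! : ℝ) * (x ! : ℝ)) ≤ ((x:ℝ) ^ x) * ((x:ℝ) ^ x) := this
          _ = (x:ℝ) ^ (2 * x) := by rw [← pow_add]; ring_nf
      have hexp : (x:ℝ) ^ (2 * x) ≤ Real.exp (θ1 * x + θ2 * x + 2 * phi * x * x) := by
        have h1 : (x:ℝ) ^ (2 * x) = Real.exp (((2 * x : ℕ) : ℝ) * Real.log x) := by
          rw [Real.exp_nat_mul, Real.exp_log hx0]
        rw [h1]
        apply Real.exp_le_exp.2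
        push_cast
        have hl : 2 * (x:ℝ) * Real.log x ≤ 2 * x * ((phi/2) * x) := by
          apply mul_le_mul_of_nonneg_left hlx (by positivity)
        nlinarith
      have hge1 : (1:ℝ) ≤
          Real.exp (θ1 * x + θ2 * x + 2 * phi * x * x) / ((x ! : ℝ) * (x ! : ℝ)) := by
        rw [le_div_iff₀ (by positivity)]
        calc (1:ℝ) * ((x ! : ℝ) * (x ! : ℝ)) = (x ! : ℝ) * (x ! : ℝ) := one_mul _
          _ ≤ (x:ℝ) ^ (2 * x) := hfac
          _ ≤ _ := hexp
      simpa [hg] using ENNReal.one_le_ofReal.2 hge1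
    by_contra htop
    have hle : ∑' x : ℕ, g x ≤ ∑' x : ℕ, ∑' y : ℕ,
        ENNReal.ofReal (Real.exp (θ1 * x + θ2 * y + 2 * phi * x * y) / ((x ! : ℝ) * (y ! : ℝ))) :=
      ENNReal.tsum_le_tsum fun x => ENNReal.le_tsum x
    have hne : ∑' x : ℕ, g x ≠ ⊤ := fun h => htop (top_le_iff.1 (h ▸ hle))
    have h0 := ENNReal.tendsto_atTop_zero_of_tsum_ne_top hne
    have hlt : ∀ᶠ x : ℕ in Filter.atTop, g x < 1 :=
      h0.eventually (gt_mem_nhds zero_lt_one)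
    rcases (hnat.and hlt).exists with ⟨x, h1, h2⟩
    exact absurd h1 (not_le.2 h2)
end

section
/- The univariate exponential family with square-root sufficient statistic and Poisson base measure is normalizable for all parameters: for all η1, η2 ∈ ℝ, Σ_{x=0}^∞ exp(η1 x + η2 √x − log(x!)) < ∞. -/
open scoped Nat
open Real
open scoped ENNReal

lemma sqr_family_summable (η1 η2 : ℝ) :
    Summable (fun x : ℕ => Real.exp (η1 * x + η2 * Real.sqrt x) / (x ! : ℝ)) := by
  have hsum : Summable (fun x : ℕ =>
      Real.exp |η2| * ((Real.exp (η1 + |η2|)) ^ x / (x ! : ℝ))) :=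
    (Real.summable_pow_div_factorial _).mul_left _
  refine Summable.of_nonneg_of_le (fun x => by positivity) (fun x => ?_) hsum
  have hfac : (0:ℝ) < (x ! : ℝ) := by positivity
  rw [div_le_iff₀ hfac] at *
  have hkey : η1 * x + η2 * Real.sqrt x ≤ |η2| + (η1 + |η2|) * x := by
    have hs : Real.sqrt x ≤ (x:ℝ) + 1 := by
      nlinarith [Real.sq_sqrt (Nat.cast_nonneg x : (0:ℝ) ≤ x),
        Real.sqrt_nonneg (x:ℝ), sq_nonneg (Real.sqrt x - 1)]
    have h2 : η2 * Real.sqrt x ≤ |η2| * ((x:ℝ) + 1) := by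
      calc η2 * Real.sqrt x ≤ |η2| * Real.sqrt x := by
            exact mul_le_mul_of_nonneg_right (le_abs_self η2) (Real.sqrt_nonneg _)
        _ ≤ |η2| * ((x:ℝ) + 1) := by
            exact mul_le_mul_of_nonneg_left hs (abs_nonneg _)
    nlinarith
  calc Real.exp (η1 * x + η2 * Real.sqrt x)
      ≤ Real.exp (|η2| + (η1 + |η2|) * x) := Real.exp_le_exp.mpr hkey
    _ = Real.exp |η2| * (Real.exp (η1 + |η2|)) ^ x := by
        rw [Real.exp_add, ← Real.exp_nat_mul, mul_comm (x:ℝ)]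
    _ = Real.exp |η2| * ((Real.exp (η1 + |η2|)) ^ x / (x ! : ℝ)) * (x ! : ℝ) := by
        field_simp

/-- The univariate exponential family with square-root sufficient statistic and Poisson
base measure is normalizable for all parameters. -/
theorem sqr_family_normalizable (η1 η2 : ℝ) :
    ∑' x : ℕ,
        ENNReal.ofReal (Real.exp (η1 * x + η2 * Real.sqrt x) / (x ! : ℝ)) < ⊤ := by
  rw [← ENNReal.ofReal_tsum_of_nonneg (fun x => by positivity) (sqr_family_summable η1 η2)]
  exact ENNReal.ofReal_lt_top
end

section
/- The distributional transform of a random variable is uniformly distributed: if X is any real random variable with CDF F, V ~ Uniform(0,1) independent of X, and U = F(X−) + V·P(X = x evaluated at X) (i.e., U = P(X < X) + V·P(X = X) using the left limit of F at X), then U ~ Uniform(0,1). -/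
open MeasureTheory ProbabilityTheory
open scoped ENNReal

/-- If every "initial segment" of `T` below a point of `T` is null, then `T` is null. -/
lemma null_of_initial_segments_null (μ : Measure ℝ) (T : Set ℝ)
    (h : ∀ x ∈ T, μ (T ∩ Set.Iic x) = 0) : μ T = 0 := by
  classical
  set M : Set ℝ := {y ∈ T | ∀ x ∈ T, x ≤ y} with hM_def
  have hM : μ M = 0 := by
    rcases M.eq_empty_or_nonempty with hE | ⟨y, hyT, hy⟩
    · simp [hE]
    · refine measure_mono_null (fun z hz => ?_) (h y hyT)
      exact ⟨hz.1, hy z hz.1⟩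
  set S : ℚ → Set ℝ := fun r => {y ∈ T | y ≤ (r : ℝ) ∧ ∃ x ∈ T, (r : ℝ) ≤ x} with hS_def
  have hSnull : ∀ r : ℚ, μ (S r) = 0 := by
    intro r
    by_cases hr : ∃ x ∈ T, (r : ℝ) ≤ x
    · obtain ⟨x, hxT, hrx⟩ := hr
      refine measure_mono_null (fun z hz => ?_) (h x hxT)
      exact ⟨hz.1, le_trans hz.2.1 hrx⟩
    · have : S r = ∅ := by
        ext z; simp only [hS_def, Set.mem_setOf_eq, Set.mem_empty_iff_false, iff_false]
        rintro ⟨_, _, hx⟩; exact hr hx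
      simp [this]
  have hcover : T ⊆ M ∪ ⋃ r : ℚ, S r := by
    intro y hy
    by_cases hmax : ∀ x ∈ T, x ≤ y
    · exact Or.inl ⟨hy, hmax⟩
    · push_neg at hmax
      obtain ⟨x, hxT, hyx⟩ := hmax
      obtain ⟨r, hr1, hr2⟩ := exists_rat_btwn hyx
      exact Or.inr (Set.mem_iUnion.mpr ⟨r, hy, hr1.le, x, hxT, hr2.le⟩)
  exact measure_mono_null hcover (measure_union_null hM (measure_iUnion_null hSnull))

/-- The distributional transform of a random variable is uniformly distributed: if `X` is
any real random variable, `V ~ Uniform(0,1)` independent of `X`, and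
`U = F(X−) + V·(F(X) − F(X−))`, then `P(U ≤ u) = u` for all `u ∈ [0,1]`. -/
theorem distributional_transform_uniform {Ω : Type*} [MeasureSpace Ω]
    [IsProbabilityMeasure (ℙ : Measure Ω)]
    (X V : Ω → ℝ) (hX : Measurable X) (hV : Measurable V)
    (hindep : IndepFun X V ℙ)
    (hunif : Measure.map V ℙ = volume.restrict (Set.Ioo (0 : ℝ) 1)) :
    ∀ u ∈ Set.Icc (0 : ℝ) 1,
      (ℙ {ω | (ℙ {ω' | X ω' < X ω}).toReal +
          V ω * ((ℙ {ω' | X ω' ≤ X ω}).toReal - (ℙ {ω' | X ω' < X ω}).toReal) ≤ u}).toReal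
        = u := by
  classical
  intro u hu
  obtain ⟨hu0, hu1⟩ := hu
  set ν : Measure ℝ := Measure.map X ℙ with hν_def
  have hprob : IsProbabilityMeasure ν := Measure.isProbabilityMeasure_map hX.aemeasurable
  have hfin : ∀ s : Set ℝ, ν s ≠ ⊤ := fun s => measure_ne_top ν s
  have hIic : ∀ x : ℝ, ℙ {ω' | X ω' ≤ x} = ν (Set.Iic x) := fun x => by
    rw [hν_def, Measure.map_apply hX measurableSet_Iic]; rfl
  have hIio : ∀ x : ℝ, ℙ {ω' | X ω' < x} = ν (Set.Iio x) := fun x => by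
    rw [hν_def, Measure.map_apply hX measurableSet_Iio]; rfl
  simp only [hIic, hIio]
  -- notation: F x = (ν (Iic x)).toReal, G x = (ν (Iio x)).toReal (written explicitly)
  have hGF : ∀ x : ℝ, (ν (Set.Iio x)).toReal ≤ (ν (Set.Iic x)).toReal := fun x =>
    ENNReal.toReal_mono (hfin _) (measure_mono Set.Iio_subset_Iic_self)
  have hFmono : Monotone (fun x => (ν (Set.Iic x)).toReal) := fun a b hab =>
    ENNReal.toReal_mono (hfin _) (measure_mono (Set.Iic_subset_Iic.mpr hab))
  have hFcdf : ∀ x : ℝ, cdf ν x = (ν (Set.Iic x)).toReal := fun x => cdf_eq_real ν x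
  have hF_le_one : ∀ x : ℝ, (ν (Set.Iic x)).toReal ≤ 1 := fun x => by
    rw [← hFcdf]; exact cdf_le_one ν x
  -- the set where V lands in (0,1)
  set W : Set Ω := V ⁻¹' (Set.Ioo 0 1) with hW_def
  have hWm : MeasurableSet W := hV measurableSet_Ioo
  have hWone : ℙ W = 1 := by
    have h1 : Measure.map V ℙ (Set.Ioo 0 1) = ℙ W := Measure.map_apply hV measurableSet_Ioo
    rw [hunif] at h1
    rw [← h1, Measure.restrict_apply measurableSet_Ioo, Set.inter_self, Real.volume_Ioo]
    norm_num
  have hWc : ℙ Wᶜ = 0 := by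
    rw [measure_compl hWm (measure_ne_top _ _), hWone, measure_univ, tsub_self]
  have hinterW : ∀ S : Set Ω, ℙ (S ∩ W) = ℙ S := by
    intro S
    refine le_antisymm (measure_mono Set.inter_subset_left) ?_
    calc ℙ S ≤ ℙ ((S ∩ W) ∪ Wᶜ) := measure_mono (fun ω h => by
          by_cases hω : ω ∈ W
          · exact Or.inl ⟨h, hω⟩
          · exact Or.inr hω)
      _ ≤ ℙ (S ∩ W) + ℙ Wᶜ := measure_union_le _ _
      _ = ℙ (S ∩ W) := by rw [hWc, add_zero]
  have hVle : ∀ t : ℝ, 0 ≤ t → t ≤ 1 → ℙ (V ⁻¹' Set.Iic t) = ENNReal.ofReal t := by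
    intro t ht0 ht1
    rw [← Measure.map_apply hV measurableSet_Iic, hunif,
      Measure.restrict_apply measurableSet_Iic]
    refine le_antisymm ?_ ?_
    · calc volume (Set.Iic t ∩ Set.Ioo 0 1) ≤ volume (Set.Ioc 0 t) :=
            measure_mono (fun x hx => ⟨hx.2.1, hx.1⟩)
        _ = ENNReal.ofReal t := by rw [Real.volume_Ioc, sub_zero]
    · calc ENNReal.ofReal t = volume (Set.Ioo 0 t) := by rw [Real.volume_Ioo, sub_zero]
        _ ≤ volume (Set.Iic t ∩ Set.Ioo 0 1) :=
            measure_mono (fun x hx => ⟨hx.2.le, hx.1, lt_of_lt_of_le hx.2 ht1⟩)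
  -- case u = 0
  rcases eq_or_lt_of_le hu0 with h0 | h0
  · -- u = 0
    subst h0
    have hsub : {ω | (ν (Set.Iio (X ω))).toReal +
        V ω * ((ν (Set.Iic (X ω))).toReal - (ν (Set.Iio (X ω))).toReal) ≤ (0:ℝ)} ∩ W ⊆
        X ⁻¹' {x : ℝ | (ν (Set.Iic x)).toReal ≤ 0} := by
      rintro ω ⟨hE, hV0, hV1⟩
      simp only [Set.mem_setOf_eq] at hE
      show (ν (Set.Iic (X ω))).toReal ≤ 0
      have h1 : 0 ≤ V ω * ((ν (Set.Iic (X ω))).toReal - (ν (Set.Iio (X ω))).toReal) :=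
        mul_nonneg hV0.le (sub_nonneg.mpr (hGF _))
      have h2 : (0:ℝ) ≤ (ν (Set.Iio (X ω))).toReal := ENNReal.toReal_nonneg
      have h3 : V ω * ((ν (Set.Iic (X ω))).toReal - (ν (Set.Iio (X ω))).toReal) ≤ 0 := by linarith
      have h4 : (ν (Set.Iic (X ω))).toReal - (ν (Set.Iio (X ω))).toReal ≤ 0 := by
        by_contra hcon
        push_neg at hcon
        exact absurd (mul_pos hV0 hcon) (not_lt.mpr h3)
      linarith
    have hT0m : MeasurableSet {x : ℝ | (ν (Set.Iic x)).toReal ≤ 0} :=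
      hFmono.measurable measurableSet_Iic
    have hT0 : ν {x : ℝ | (ν (Set.Iic x)).toReal ≤ 0} = 0 := by
      refine null_of_initial_segments_null ν _ (fun x hx => ?_)
      refine measure_mono_null Set.inter_subset_right ?_
      have : (ν (Set.Iic x)).toReal = 0 := le_antisymm hx ENNReal.toReal_nonneg
      exact (ENNReal.toReal_eq_zero_iff _).mp this |>.resolve_right (hfin _)
    have hE0 : ℙ {ω | (ν (Set.Iio (X ω))).toReal +
        V ω * ((ν (Set.Iic (X ω))).toReal - (ν (Set.Iio (X ω))).toReal) ≤ (0:ℝ)} = 0 := by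
      rw [← hinterW]
      refine measure_mono_null hsub ?_
      rw [show ℙ (X ⁻¹' {x : ℝ | (ν (Set.Iic x)).toReal ≤ 0}) =
        ν {x : ℝ | (ν (Set.Iic x)).toReal ≤ 0} from (Measure.map_apply hX hT0m).symm]
      exact hT0
    rw [hE0]; simp
  rcases eq_or_lt_of_le hu1 with h1 | h1
  · -- u = 1
    subst h1
    have hsub : W ⊆ {ω | (ν (Set.Iio (X ω))).toReal +
        V ω * ((ν (Set.Iic (X ω))).toReal - (ν (Set.Iio (X ω))).toReal) ≤ (1:ℝ)} := by
      rintro ω ⟨hV0, hV1⟩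
      simp only [Set.mem_setOf_eq]
      have h2 : V ω * ((ν (Set.Iic (X ω))).toReal - (ν (Set.Iio (X ω))).toReal) ≤
          (ν (Set.Iic (X ω))).toReal - (ν (Set.Iio (X ω))).toReal :=
        mul_le_of_le_one_left (sub_nonneg.mpr (hGF _)) hV1.le
      have := hF_le_one (X ω)
      linarith
    have hE1 : ℙ {ω | (ν (Set.Iio (X ω))).toReal +
        V ω * ((ν (Set.Iic (X ω))).toReal - (ν (Set.Iio (X ω))).toReal) ≤ (1:ℝ)} = 1 := by
      refine le_antisymm prob_le_one ?_
      rw [← hWone]; exact measure_mono hsub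
    rw [hE1]; simp
  -- main case : 0 < u < 1
  set S : Set ℝ := {x : ℝ | u ≤ (ν (Set.Iic x)).toReal} with hS_def
  have hSne : S.Nonempty := by
    have h := (tendsto_cdf_atTop ν).eventually_const_lt h1
    obtain ⟨x, hx⟩ := h.exists
    refine ⟨x, ?_⟩
    show u ≤ (ν (Set.Iic x)).toReal
    rw [← hFcdf x]
    exact hx.le
  have hSbdd : BddBelow S := by
    have h := (tendsto_cdf_atBot ν).eventually_lt_const h0
    obtain ⟨x0, hx0⟩ := h.exists
    refine ⟨x0, fun y hy => ?_⟩
    by_contra hcon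
    push_neg at hcon
    have h2 : (ν (Set.Iic y)).toReal ≤ (ν (Set.Iic x0)).toReal := hFmono hcon.le
    have hy' : u ≤ (ν (Set.Iic y)).toReal := hy
    have hx0' : (ν (Set.Iic x0)).toReal < u := by rw [← hFcdf x0]; exact hx0
    linarith
  set q : ℝ := sInf S with hq_def
  -- u ≤ F q  (right continuity)
  have hqF : u ≤ (ν (Set.Iic q)).toReal := by
    have hseq : ∀ n : ℕ, u ≤ cdf ν (q + 1 / (n + 1)) := by
      intro n
      have hpos : (0:ℝ) < 1 / (n + 1) := by positivity
      obtain ⟨s, hsS, hs⟩ := exists_lt_of_csInf_lt hSne (lt_add_of_pos_right q hpos)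
      rw [hFcdf]
      exact le_trans hsS (hFmono hs.le)
    have hbase : Filter.Tendsto (fun n : ℕ => q + 1 / (n + 1)) Filter.atTop (nhds q) := by
      have := tendsto_one_div_add_atTop_nhds_zero_nat (𝕜 := ℝ)
      have h2 := Filter.Tendsto.const_add q this
      simpa using h2
    have htend : Filter.Tendsto (fun n : ℕ => q + 1 / (n + 1)) Filter.atTop
        (nhdsWithin q (Set.Ici q)) := by
      refine tendsto_nhdsWithin_of_tendsto_nhds_of_eventually_within _ hbase
        (Filter.Eventually.of_forall fun n => ?_)
      have hpos : (0:ℝ) < 1 / (n + 1) := by positivity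
      exact Set.mem_Ici.mpr (by linarith)
    have hcomp := ((cdf ν).right_continuous q).tendsto.comp htend
    have := ge_of_tendsto hcomp (Filter.Eventually.of_forall hseq)
    rwa [hFcdf] at this
  -- ν (Iio q) ≤ ofReal u  (left side)
  have hqG : ν (Set.Iio q) ≤ ENNReal.ofReal u := by
    have hunion : Set.Iio q = ⋃ n : ℕ, Set.Iic (q - 1 / (n + 1)) := by
      ext y
      simp only [Set.mem_Iio, Set.mem_iUnion, Set.mem_Iic]
      constructor
      · intro hy
        obtain ⟨n, hn⟩ := exists_nat_one_div_lt (sub_pos.mpr hy)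
        exact ⟨n, by push_cast at hn ⊢; linarith⟩
      · rintro ⟨n, hn⟩
        have hpos : (0:ℝ) < 1 / (n + 1) := by positivity
        linarith
    have hdir : Directed (· ⊆ ·) (fun n : ℕ => Set.Iic (q - 1 / ((n:ℝ) + 1))) := by
      refine (Monotone.directed_le ?_)
      intro n m hnm
      refine Set.Iic_subset_Iic.mpr ?_
      have hnm' : ((n:ℝ)) ≤ (m:ℝ) := Nat.cast_le.mpr hnm
      have h2 : 1 / ((m:ℝ) + 1) ≤ 1 / ((n:ℝ) + 1) :=
        one_div_le_one_div_of_le (by positivity) (by linarith)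
      linarith
    rw [hunion, Directed.measure_iUnion hdir]
    refine iSup_le (fun n => ?_)
    have hpos : (0:ℝ) < 1 / ((n:ℝ) + 1) := by positivity
    have hlt : (ν (Set.Iic (q - 1 / ((n:ℝ) + 1)))).toReal < u := by
      by_contra hcon
      push_neg at hcon
      have hmem : q - 1 / ((n:ℝ) + 1) ∈ S := hcon
      have := csInf_le hSbdd hmem
      rw [← hq_def] at this
      linarith
    calc ν (Set.Iic (q - 1 / ((n:ℝ) + 1)))
        = ENNReal.ofReal ((ν (Set.Iic (q - 1 / ((n:ℝ) + 1)))).toReal) := by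
          rw [ENNReal.ofReal_toReal (hfin _)]
      _ ≤ ENNReal.ofReal u := ENNReal.ofReal_le_ofReal hlt.le
  have hGqu : (ν (Set.Iio q)).toReal ≤ u := by
    have := ENNReal.toReal_mono ENNReal.ofReal_ne_top hqG
    rwa [ENNReal.toReal_ofReal h0.le] at this
  -- the exceptional null set T
  set T : Set ℝ := {x : ℝ | q < x ∧ (ν (Set.Iic x)).toReal ≤ u} with hT_def
  have hTm : MeasurableSet T := by
    have : T = Set.Ioi q ∩ (fun x => (ν (Set.Iic x)).toReal) ⁻¹' (Set.Iic u) := rfl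
    rw [this]
    exact measurableSet_Ioi.inter (hFmono.measurable measurableSet_Iic)
  have hTnull : ν T = 0 := by
    refine null_of_initial_segments_null ν T (fun x hx => ?_)
    have hqx : q ≤ x := hx.1.le
    have hle : ν (Set.Iic x) ≤ ν (Set.Iic q) := by
      calc ν (Set.Iic x) = ENNReal.ofReal ((ν (Set.Iic x)).toReal) := by
            rw [ENNReal.ofReal_toReal (hfin _)]
        _ ≤ ENNReal.ofReal u := ENNReal.ofReal_le_ofReal hx.2
        _ ≤ ENNReal.ofReal ((ν (Set.Iic q)).toReal) := ENNReal.ofReal_le_ofReal hqF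
        _ = ν (Set.Iic q) := ENNReal.ofReal_toReal (hfin _)
    have hIocnull : ν (Set.Ioc q x) = 0 := by
      have hsplit : ν (Set.Iic q) + ν (Set.Ioc q x) = ν (Set.Iic x) := by
        rw [← measure_union (Set.Iic_disjoint_Ioc le_rfl) measurableSet_Ioc,
          Set.Iic_union_Ioc_eq_Iic hqx]
      have h2 : ν (Set.Iic q) + ν (Set.Ioc q x) ≤ ν (Set.Iic q) + 0 := by
        rw [add_zero, hsplit]; exact hle
      exact le_antisymm (ENNReal.le_of_add_le_add_left (hfin _) h2) zero_le
    refine measure_mono_null (fun z hz => ?_) hIocnull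
    exact ⟨hz.1.1, hz.2⟩
  -- events A and B
  set A : Set Ω := X ⁻¹' (Set.Iio q) with hA_def
  set B : Set Ω := X ⁻¹' {q} ∩
    {ω | (ν (Set.Iio q)).toReal +
      V ω * ((ν (Set.Iic q)).toReal - (ν (Set.Iio q)).toReal) ≤ u} with hB_def
  have hBm : MeasurableSet B := by
    refine (hX (measurableSet_singleton q)).inter ?_
    exact measurableSet_le (measurable_const.add (hV.mul_const _)) measurable_const
  have hABdisj : Disjoint A B := by
    refine Set.disjoint_left.mpr (fun ω hA hB => ?_)
    have h1 : X ω < q := hA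
    have h2 : X ω = q := hB.1
    exact absurd h2 (ne_of_lt h1)
  -- lower inclusion
  have hlow : (A ∪ B) ∩ W ⊆ {ω | (ν (Set.Iio (X ω))).toReal +
      V ω * ((ν (Set.Iic (X ω))).toReal - (ν (Set.Iio (X ω))).toReal) ≤ u} := by
    rintro ω ⟨hAB, hV0, hV1⟩
    simp only [Set.mem_setOf_eq]
    rcases hAB with hA | hB
    · have hXq : X ω < q := hA
      have hFlt : (ν (Set.Iic (X ω))).toReal < u := by
        by_contra hcon
        push_neg at hcon
        have : q ≤ X ω := csInf_le hSbdd hcon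
        linarith
      have h2 : V ω * ((ν (Set.Iic (X ω))).toReal - (ν (Set.Iio (X ω))).toReal) ≤
          (ν (Set.Iic (X ω))).toReal - (ν (Set.Iio (X ω))).toReal :=
        mul_le_of_le_one_left (sub_nonneg.mpr (hGF _)) hV1.le
      linarith
    · obtain ⟨hq, hcond⟩ := hB
      have hq' : X ω = q := hq
      rw [hq']
      exact hcond
  -- upper inclusion
  have hup : {ω | (ν (Set.Iio (X ω))).toReal +
      V ω * ((ν (Set.Iic (X ω))).toReal - (ν (Set.Iio (X ω))).toReal) ≤ u} ∩ W ⊆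
      (A ∪ B) ∪ X ⁻¹' T := by
    rintro ω ⟨hE, hV0, hV1⟩
    simp only [Set.mem_setOf_eq] at hE
    rcases lt_trichotomy (X ω) q with hlt | heq | hgt
    · exact Or.inl (Or.inl hlt)
    · refine Or.inl (Or.inr ⟨heq, ?_⟩)
      simp only [Set.mem_setOf_eq]
      rw [← heq]
      exact hE
    · refine Or.inr ?_
      have hGge : (ν (Set.Iic q)).toReal ≤ (ν (Set.Iio (X ω))).toReal :=
        ENNReal.toReal_mono (hfin _) (measure_mono (fun z hz => lt_of_le_of_lt hz hgt))
      have h3 : 0 ≤ (ν (Set.Iic (X ω))).toReal - (ν (Set.Iio (X ω))).toReal :=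
        sub_nonneg.mpr (hGF _)
      have h4 : 0 ≤ V ω * ((ν (Set.Iic (X ω))).toReal - (ν (Set.Iio (X ω))).toReal) :=
        mul_nonneg hV0.le h3
      have h5 : V ω * ((ν (Set.Iic (X ω))).toReal - (ν (Set.Iio (X ω))).toReal) ≤ 0 := by
        linarith
      have h6 : (ν (Set.Iic (X ω))).toReal - (ν (Set.Iio (X ω))).toReal = 0 := by
        rcases mul_eq_zero.mp (le_antisymm h5 h4) with hc | hc
        · exact absurd hc (ne_of_gt hV0)
        · exact hc
      show X ω ∈ T
      exact ⟨hgt, by linarith⟩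
  -- measure of A ∪ B equals u
  have hPA : ℙ A = ν (Set.Iio q) := (Measure.map_apply hX measurableSet_Iio).symm
  have hPq : ℙ (X ⁻¹' {q}) = ν {q} := (Measure.map_apply hX (measurableSet_singleton q)).symm
  have hsingleton : ν {q} = ν (Set.Iic q) - ν (Set.Iio q) := by
    have : Set.Iic q \ Set.Iio q = {q} := by
      ext z
      simp only [Set.mem_diff, Set.mem_Iic, Set.mem_Iio, not_lt, Set.mem_singleton_iff]
      constructor
      · rintro ⟨h1, h2⟩; exact le_antisymm h1 h2
      · rintro rfl; exact ⟨le_rfl, le_rfl⟩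
    rw [← this, measure_diff Set.Iio_subset_Iic_self measurableSet_Iio.nullMeasurableSet (hfin _)]
  have hABu : (ℙ (A ∪ B)).toReal = u := by
    rw [measure_union hABdisj hBm]
    rcases eq_or_lt_of_le (sub_nonneg.mpr (hGF q)) with hΔ | hΔ
    · -- no atom at q
      have hFG : (ν (Set.Iic q)).toReal = (ν (Set.Iio q)).toReal := by linarith
      have hq0 : ν {q} = 0 := by
        rw [hsingleton]
        have : ν (Set.Iic q) = ν (Set.Iio q) :=
          (ENNReal.toReal_eq_toReal_iff' (hfin _) (hfin _)).mp hFG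
        rw [this, tsub_self]
      have hB0 : ℙ B = 0 := by
        refine measure_mono_null Set.inter_subset_left ?_
        rw [hPq]; exact hq0
      rw [hB0, add_zero, hPA]
      have : u ≤ (ν (Set.Iio q)).toReal := by
        calc u ≤ (ν (Set.Iic q)).toReal := hqF
          _ = (ν (Set.Iio q)).toReal := hFG
      linarith [hGqu, this]
    · -- atom at q
      set t : ℝ := (u - (ν (Set.Iio q)).toReal) / ((ν (Set.Iic q)).toReal - (ν (Set.Iio q)).toReal)
        with ht_def
    -- t ∈ [0,1]
      have ht0 : 0 ≤ t := div_nonneg (by linarith) hΔ.le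
      have ht1 : t ≤ 1 := (div_le_one hΔ).mpr (by linarith)
      have hBeq : B = X ⁻¹' {q} ∩ V ⁻¹' (Set.Iic t) := by
        rw [hB_def]
        refine congrArg (X ⁻¹' {q} ∩ ·) ?_
        ext ω
        simp only [Set.mem_setOf_eq, Set.mem_preimage, Set.mem_Iic]
        rw [ht_def, le_div_iff₀ hΔ]
        constructor <;> intro h <;> nlinarith
      have hPB : ℙ B = ν {q} * ENNReal.ofReal t := by
        rw [hBeq, hindep.measure_inter_preimage_eq_mul _ _ (measurableSet_singleton q)
          measurableSet_Iic, hPq, hVle t ht0 ht1]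
      have hqtoReal : (ν {q}).toReal = (ν (Set.Iic q)).toReal - (ν (Set.Iio q)).toReal := by
        rw [hsingleton, ENNReal.toReal_sub_of_le (measure_mono Set.Iio_subset_Iic_self) (hfin _)]
      rw [hPA, hPB,
        ENNReal.toReal_add (hfin _) (ENNReal.mul_ne_top (hfin _) ENNReal.ofReal_ne_top),
        ENNReal.toReal_mul, ENNReal.toReal_ofReal ht0, hqtoReal]
      have hne : (ν (Set.Iic q)).toReal - (ν (Set.Iio q)).toReal ≠ 0 := ne_of_gt hΔ
      rw [ht_def, mul_comm, div_mul_cancel₀ _ hne]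
      ring
  -- conclude
  have hElow : ℙ (A ∪ B) ≤ ℙ {ω | (ν (Set.Iio (X ω))).toReal +
      V ω * ((ν (Set.Iic (X ω))).toReal - (ν (Set.Iio (X ω))).toReal) ≤ u} := by
    rw [← hinterW (A ∪ B)]
    exact measure_mono hlow
  have hEup : ℙ {ω | (ν (Set.Iio (X ω))).toReal +
      V ω * ((ν (Set.Iic (X ω))).toReal - (ν (Set.Iio (X ω))).toReal) ≤ u} ≤ ℙ (A ∪ B) := by
    rw [← hinterW {ω | (ν (Set.Iio (X ω))).toReal +
      V ω * ((ν (Set.Iic (X ω))).toReal - (ν (Set.Iio (X ω))).toReal) ≤ u}]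
    calc ℙ ({ω | (ν (Set.Iio (X ω))).toReal +
          V ω * ((ν (Set.Iic (X ω))).toReal - (ν (Set.Iio (X ω))).toReal) ≤ u} ∩ W)
        ≤ ℙ ((A ∪ B) ∪ X ⁻¹' T) := measure_mono hup
      _ ≤ ℙ (A ∪ B) + ℙ (X ⁻¹' T) := measure_union_le _ _
      _ = ℙ (A ∪ B) := by
          rw [show ℙ (X ⁻¹' T) = ν T from (Measure.map_apply hX hTm).symm, hTnull, add_zero]
  rw [le_antisymm hEup hElow]
  exact hABu
end
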